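/- Let N be a normal subgroup of a finite group G. Then d(G) ≤ d(N)·d(G/N), where d denotes the commuting probability; equivalently, k(G)·|N|·|G/N| ≤ k(N)·k(G/N)·|G|. -/

import Mathlib

open Finset

namespace CommProbAux

open scoped Classical

variable {G : Type*} [Group G] [Fintype G] (N : Subgroup G) [N.Normal]

/-- Commuting pairs of `G` lying over the pair of cosets `(q1, q2)`. -/
noncomputable def fib (q1 q2 : G ⧸ N) : Finset (G × G) :=
  univ.filter fun p => (p.1 : G ⧸ N) = q1 ∧ (p.2 : G ⧸ N) = q2 ∧ p.1 * p.2 = p.2 * p.1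

lemma fib_swap (q1 q2 : G ⧸ N) : (fib N q1 q2).card = (fib N q2 q1).card := by
  apply Finset.card_bij (fun p _ => Prod.swap p)
  · intro p hp
    simp only [fib, mem_filter, mem_univ, true_and] at hp ⊢
    exact ⟨hp.2.1, hp.1, hp.2.2.symm⟩
  · intro a _ b _ h
    exact Prod.swap_injective h
  · intro b hb
    refine ⟨Prod.swap b, ?_, rfl⟩
    simp only [fib, mem_filter, mem_univ, true_and] at hb ⊢
    exact ⟨hb.2.1, hb.1, hb.2.2.symm⟩

lemma fib_le (q1 q2 : G ⧸ N) : (fib N q1 q2).card ≤ (fib N q1 1).card := by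
  set c : G → G := fun x =>
    if h : ∃ y : G, (y : G ⧸ N) = q2 ∧ x * y = y * x then h.choose else 1 with hc
  apply Finset.card_le_card_of_injOn (fun p => (p.1, (c p.1)⁻¹ * p.2))
  · intro p hp
    simp only [fib, mem_coe, mem_filter, mem_univ, true_and] at hp ⊢
    obtain ⟨h1, h2, h3⟩ := hp
    have hex : ∃ y : G, (y : G ⧸ N) = q2 ∧ p.1 * y = y * p.1 := ⟨p.2, h2, h3⟩
    have hspec : ((c p.1 : G) : G ⧸ N) = q2 ∧ p.1 * c p.1 = c p.1 * p.1 := by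
      rw [hc]; simp only [dif_pos hex]; exact hex.choose_spec
    refine ⟨h1, ?_, ?_⟩
    · rw [QuotientGroup.mk_mul, QuotientGroup.mk_inv, hspec.1, h2, inv_mul_cancel]
    · have hcomm : Commute p.1 ((c p.1)⁻¹ * p.2) :=
        (Commute.inv_right hspec.2).mul_right h3
      exact hcomm
  · intro a ha b hb h
    simp only [Prod.mk.injEq] at h
    obtain ⟨h1, h2⟩ := h
    rw [h1] at h2
    exact Prod.ext h1 (mul_left_cancel h2)

lemma fib_one_one : (fib N 1 1).card = Nat.card { p : N × N // Commute p.1 p.2 } := by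
  rw [← Nat.card_eq_finsetCard]
  refine Nat.card_congr ?_
  refine
    { toFun := fun p =>
        ⟨(⟨p.1.1, ?_⟩, ⟨p.1.2, ?_⟩), ?_⟩
      invFun := fun p => ⟨((p.1.1 : G), (p.1.2 : G)), ?_⟩
      left_inv := fun p => by ext <;> rfl
      right_inv := fun p => by ext <;> rfl }
  · have := p.2
    simp only [fib, mem_filter, mem_univ, true_and] at this
    exact (QuotientGroup.eq_one_iff _).mp this.1
  · have := p.2
    simp only [fib, mem_filter, mem_univ, true_and] at this
    exact (QuotientGroup.eq_one_iff _).mp this.2.1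
  · have := p.2
    simp only [fib, mem_filter, mem_univ, true_and] at this
    exact Subtype.ext this.2.2
  · simp only [fib, mem_filter, mem_univ, true_and]
    refine ⟨(QuotientGroup.eq_one_iff _).mpr p.1.1.2, (QuotientGroup.eq_one_iff _).mpr p.1.2.2, ?_⟩
    exact congrArg Subtype.val p.2

lemma card_comm_le :
    Nat.card { p : G × G // Commute p.1 p.2 } ≤
      Nat.card { p : N × N // Commute p.1 p.2 } *
        Nat.card { p : (G ⧸ N) × (G ⧸ N) // Commute p.1 p.2 } := by
  haveI : Fintype (G ⧸ N) := Fintype.ofFinite _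
  set S : Finset (G × G) := univ.filter fun p => Commute p.1 p.2 with hS
  set T : Finset ((G ⧸ N) × (G ⧸ N)) := univ.filter fun p => Commute p.1 p.2 with hT
  have hSc : Nat.card { p : G × G // Commute p.1 p.2 } = S.card := by
    rw [Nat.card_eq_fintype_card, hS, Fintype.card_subtype]
  have hTc : Nat.card { p : (G ⧸ N) × (G ⧸ N) // Commute p.1 p.2 } = T.card := by
    rw [Nat.card_eq_fintype_card, hT, Fintype.card_subtype]
  rw [hSc, hTc]
  have key : S.card = ∑ q ∈ T, (S.filter fun p => ((p.1 : G ⧸ N), (p.2 : G ⧸ N)) = q).card := by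
    apply Finset.card_eq_sum_card_fiberwise
    intro p hp
    simp only [hS, hT, mem_coe, mem_filter, mem_univ, true_and] at hp ⊢
    simp only [hS, hT, mem_coe, mem_filter, mem_univ, true_and, Commute, SemiconjBy] at hp ⊢
    calc (p.1 : G ⧸ N) * p.2 = ((p.1 * p.2 : G) : G ⧸ N) := by rw [QuotientGroup.mk_mul]
      _ = ((p.2 * p.1 : G) : G ⧸ N) := by rw [hp]
      _ = (p.2 : G ⧸ N) * p.1 := by rw [QuotientGroup.mk_mul]
  rw [key]
  calc ∑ q ∈ T, (S.filter fun p => ((p.1 : G ⧸ N), (p.2 : G ⧸ N)) = q).card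
      ≤ ∑ _q ∈ T, Nat.card { p : N × N // Commute p.1 p.2 } := by
        apply Finset.sum_le_sum
        intro q _
        have heq : (S.filter fun p => ((p.1 : G ⧸ N), (p.2 : G ⧸ N)) = q) = fib N q.1 q.2 := by
          ext p
          simp only [hS, fib, mem_filter, mem_univ, true_and]
          simp only [hS, fib, mem_filter, mem_univ, true_and, Prod.ext_iff, Commute, SemiconjBy, mem_coe, Set.mem_setOf_eq]
          tauto
        rw [heq]
        calc (fib N q.1 q.2).card ≤ (fib N q.1 1).card := fib_le N q.1 q.2
          _ = (fib N 1 q.1).card := fib_swap N q.1 1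
          _ ≤ (fib N 1 1).card := fib_le N 1 q.1
          _ = Nat.card { p : N × N // Commute p.1 p.2 } := fib_one_one N
    _ = Nat.card { p : N × N // Commute p.1 p.2 } * T.card := by
        rw [Finset.sum_const, smul_eq_mul, mul_comm]

end CommProbAux

/-- For a normal subgroup `N` of a finite group `G`, the commuting probability of `G` is at
most the product of the commuting probabilities of `N` and of `G/N`. -/
theorem commProb_le_commProb_mul_commProb_quotient (G : Type*) [Group G] [Fintype G]
    (N : Subgroup G) [N.Normal] :
    commProb G ≤ commProb N * commProb (G ⧸ N) := by
  have hcard : Nat.card G = Nat.card (G ⧸ N) * Nat.card N :=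
    Subgroup.card_eq_card_quotient_mul_card_subgroup N
  rw [commProb_def, commProb_def, commProb_def, div_mul_div_comm, ← Nat.cast_mul,
    ← mul_pow, ← Nat.cast_mul, hcard, mul_comm (Nat.card (G ⧸ N))]
  gcongr
  exact_mod_cast CommProbAux.card_comm_le N
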